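/- Let V be a vector space, (A_γ)_{γ∈Γ} a net of linear subspaces of V and (x_γ) a net in V such that the net of cosets (x_γ + A_γ) is decreasing (w.r.t. inclusion) and ⋂_γ (x_γ + A_γ) ⊆ ⋂_γ A_γ. Then the net (span{x_γ} + A_γ) is decreasing and ⋂_γ (span{x_γ} + A_γ) = ⋂_γ A_γ. -/
import Mathlib


/-- Let `(A_γ)` be a net of linear subspaces of a vector space `V` (over `ℝ` or `ℂ`) and
`(x_γ)` a net in `V` such that the net of cosets `(x_γ + A_γ)` is decreasing and
`⋂_γ (x_γ + A_γ) ⊆ ⋂_γ A_γ`. Then the net `(span{x_γ} + A_γ)` is decreasing and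
`⋂_γ (span{x_γ} + A_γ) = ⋂_γ A_γ`. -/
theorem decreasing_coset_net_lemma {𝕜 V : Type*} [RCLike 𝕜] [AddCommGroup V] [Module 𝕜 V]
    {Γ : Type*} [Preorder Γ] [IsDirected Γ (· ≤ ·)] [Nonempty Γ]
    (A : Γ → Submodule 𝕜 V) (x : Γ → V)
    (hdec : ∀ γ₁ γ₂, γ₁ ≤ γ₂ →
      (fun a => x γ₂ + a) '' (A γ₂ : Set V) ⊆ (fun a => x γ₁ + a) '' (A γ₁ : Set V))
    (hint : (⋂ γ, (fun a => x γ + a) '' (A γ : Set V)) ⊆ ⋂ γ, (A γ : Set V)) :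
    Antitone (fun γ => (𝕜 ∙ x γ) ⊔ A γ) ∧
      (⋂ γ, (((𝕜 ∙ x γ) ⊔ A γ : Submodule 𝕜 V) : Set V)) = ⋂ γ, (A γ : Set V) := by
  -- difference of base points lies in the bigger subspace
  have hx : ∀ γ₁ γ₂, γ₁ ≤ γ₂ → x γ₂ - x γ₁ ∈ A γ₁ := by
    intro γ₁ γ₂ h
    have := hdec γ₁ γ₂ h ⟨0, (A γ₂).zero_mem, rfl⟩
    obtain ⟨b, hb, hb'⟩ := this
    simp only [add_zero] at hb'
    have : x γ₂ - x γ₁ = b := by rw [← hb']; abel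
    rwa [this]
  -- the subspaces are decreasing
  have hA : ∀ γ₁ γ₂, γ₁ ≤ γ₂ → A γ₂ ≤ A γ₁ := by
    intro γ₁ γ₂ h a ha
    obtain ⟨b, hb, hb'⟩ := hdec γ₁ γ₂ h ⟨a, ha, rfl⟩
    simp only at hb'
    have h2 : x γ₂ + a = x γ₁ + b := hb'.symm
    have : a = b - (x γ₂ - x γ₁) := by
      rw [eq_sub_iff_add_eq]
      calc a + (x γ₂ - x γ₁) = (x γ₂ + a) - x γ₁ := by abel
        _ = (x γ₁ + b) - x γ₁ := by rw [h2]
        _ = b := by abel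
    rw [this]
    exact (A γ₁).sub_mem hb (hx γ₁ γ₂ h)
  have hanti : Antitone (fun γ => (𝕜 ∙ x γ) ⊔ A γ) := by
    intro γ₁ γ₂ h
    apply sup_le
    · rw [Submodule.span_singleton_le_iff_mem]
      have : x γ₂ = x γ₁ + (x γ₂ - x γ₁) := by abel
      rw [this]
      exact Submodule.add_mem _
        (Submodule.mem_sup_left (Submodule.mem_span_singleton_self _))
        (Submodule.mem_sup_right (hx γ₁ γ₂ h))
    · exact le_trans (hA γ₁ γ₂ h) le_sup_right
  refine ⟨hanti, ?_⟩
  apply Set.Subset.antisymm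
  · -- hard direction
    intro v hv
    simp only [Set.mem_iInter, SetLike.mem_coe] at hv ⊢
    by_cases hcase : ∀ γ, ∃ γ', γ ≤ γ' ∧ x γ' ∈ A γ'
    · intro γ
      obtain ⟨γ', hγγ', hxA⟩ := hcase γ
      have : (𝕜 ∙ x γ') ⊔ A γ' = A γ' := by
        rw [sup_eq_right]
        rwa [Submodule.span_singleton_le_iff_mem]
      have hv' : v ∈ A γ' := this ▸ hv γ'
      exact hA γ γ' hγγ' hv'
    · push_neg at hcase
      obtain ⟨γ₀, hγ₀⟩ := hcase
      -- choose representations v = c γ • x γ + a γ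
      have hrep : ∀ γ, ∃ c : 𝕜, ∃ a, a ∈ A γ ∧ v = c • x γ + a := by
        intro γ
        obtain ⟨y, hy, a, ha, hya⟩ := Submodule.mem_sup.mp (hv γ)
        obtain ⟨c, rfl⟩ := Submodule.mem_span_singleton.mp hy
        exact ⟨c, a, ha, hya.symm⟩
      choose c a ha hva using hrep
      -- the coefficient is constant from γ₀ on
      have hc : ∀ γ' γ'', γ₀ ≤ γ' → γ' ≤ γ'' → c γ' = c γ'' := by
        intro γ' γ'' h0 h
        by_contra hne
        have hdmem : x γ'' - x γ' ∈ A γ' := hx γ' γ'' h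
        have key : (c γ' - c γ'') • x γ' ∈ A γ' := by
          have heq : (c γ' - c γ'') • x γ' =
              c γ'' • (x γ'' - x γ') + a γ'' - a γ' := by
            have h3 : c γ' • x γ' + a γ' = c γ'' • x γ'' + a γ'' := by
              rw [← hva γ', ← hva γ'']
            rw [sub_smul, smul_sub]
            calc c γ' • x γ' - c γ'' • x γ'
                = (c γ' • x γ' + a γ') - a γ' - c γ'' • x γ' := by abel
              _ = (c γ'' • x γ'' + a γ'') - a γ' - c γ'' • x γ' := by rw [h3]
              _ = c γ'' • x γ'' - c γ'' • x γ' + a γ'' - a γ' := by abel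
          rw [heq]
          exact (A γ').sub_mem ((A γ').add_mem ((A γ').smul_mem _ hdmem)
            (hA γ' γ'' h (ha γ''))) (ha γ')
        have : x γ' ∈ A γ' := by
          have hne' : c γ' - c γ'' ≠ 0 := sub_ne_zero.mpr hne
          have := (A γ').smul_mem (c γ' - c γ'')⁻¹ key
          rwa [inv_smul_smul₀ hne'] at this
        exact hγ₀ γ' h0 this
      by_cases hc0 : c γ₀ = 0
      · -- v is in A γ' for all γ' ≥ γ₀
        intro γ
        obtain ⟨δ, hδ1, hδ2⟩ := directed_of (· ≤ ·) γ γ₀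
        have hcδ : c δ = 0 := (hc γ₀ δ le_rfl hδ2) ▸ hc0
        have : v = a δ := by rw [hva δ, hcδ, zero_smul, zero_add]
        exact hA γ δ hδ1 (this ▸ ha δ)
      · -- impossible: w := (c γ₀)⁻¹ • v lies in all cosets
        exfalso
        set w := (c γ₀)⁻¹ • v with hw
        have hwmem : ∀ γ, w ∈ (fun a => x γ + a) '' (A γ : Set V) := by
          intro γ
          obtain ⟨δ, hδ1, hδ2⟩ := directed_of (· ≤ ·) γ γ₀
          have hcδ : c δ = c γ₀ := (hc γ₀ δ le_rfl hδ2).symm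
          have : w = x δ + (c γ₀)⁻¹ • a δ := by
            rw [hw, hva δ, hcδ, smul_add, inv_smul_smul₀ hc0]
          have hmem : w ∈ (fun a => x δ + a) '' (A δ : Set V) :=
            ⟨(c γ₀)⁻¹ • a δ, (A δ).smul_mem _ (ha δ), this.symm⟩
          exact hdec γ δ hδ1 hmem
        have hwA : ∀ γ, w ∈ A γ := by
          have := hint (Set.mem_iInter.mpr hwmem)
          simpa [Set.mem_iInter] using this
        -- but w ∈ x γ₀ + A γ₀ and w ∈ A γ₀ force x γ₀ ∈ A γ₀
        obtain ⟨b, hb, hb'⟩ := hwmem γ₀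
        have : x γ₀ = w - b := by simp only at hb'; rw [← hb']; abel
        have : x γ₀ ∈ A γ₀ := this ▸ (A γ₀).sub_mem (hwA γ₀) hb
        exact hγ₀ γ₀ le_rfl this
  · -- easy direction
    intro v hv
    simp only [Set.mem_iInter, SetLike.mem_coe] at hv ⊢
    exact fun γ => Submodule.mem_sup_right (hv γ)
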